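/- arXiv:2212.12822 — 6 statements merged into one kernel-verified Lean document; each statement's English description precedes it below -/
import Mathlib

section
/- With the same setup as the early-stopped negative binomial fact (sequence X : ℕ → {−1,+1}, positive integers p, v, k, t_v the position of the v-th −1 truncated at p, N = #{i ≤ t_v : X_i = +1}, B = #{i ≤ min(p, k+v−1) : X_i = +1}), one has N ≤ k − 1 if and only if B ≤ k − 1. -/
/-- Number of `-1`'s among `X 1, …, X i`. -/
def negCount (X : ℕ → ℤ) (i : ℕ) : ℕ :=
  ((Finset.Icc 1 i).filter (fun j => X j = -1)).card

/-- Number of `+1`'s among `X 1, …, X n`. -/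
def posCount (X : ℕ → ℤ) (n : ℕ) : ℕ :=
  ((Finset.Icc 1 n).filter (fun i => X i = 1)).card

-- `t_v`: the first index `i ∈ {1,…,p}` at which the number of `-1`'s equals `v`,
-- and `p` if no such index exists.
open Classical in
noncomputable def stopTime (X : ℕ → ℤ) (p v : ℕ) : ℕ :=
  if ∃ i ∈ Finset.Icc 1 p, negCount X i = v then
    sInf {i | i ∈ Finset.Icc 1 p ∧ negCount X i = v}
  else p

private lemma card_filter_le_add (P : ℕ → Prop) [DecidablePred P] {m n : ℕ} (h : m ≤ n) :
    ((Finset.Icc 1 n).filter P).card ≤ ((Finset.Icc 1 m).filter P).card + (n - m) := by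
  have hun : Finset.Icc 1 n = Finset.Icc 1 m ∪ Finset.Icc (m+1) n := by
    ext x; simp only [Finset.mem_Icc, Finset.mem_union]; omega
  rw [hun, Finset.filter_union]
  calc _ ≤ ((Finset.Icc 1 m).filter P).card + ((Finset.Icc (m+1) n).filter P).card :=
        Finset.card_union_le _ _
    _ ≤ ((Finset.Icc 1 m).filter P).card + (n - m) := by
        have := Finset.card_filter_le (Finset.Icc (m+1) n) P
        rw [Nat.card_Icc] at this
        omega

private lemma card_filter_mono (P : ℕ → Prop) [DecidablePred P] {m n : ℕ} (h : m ≤ n) :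
    ((Finset.Icc 1 m).filter P).card ≤ ((Finset.Icc 1 n).filter P).card :=
  Finset.card_le_card (Finset.filter_subset_filter _ (Finset.Icc_subset_Icc_right h))

private lemma pos_add_neg (X : ℕ → ℤ) (hX : ∀ i, X i = 1 ∨ X i = -1) (n : ℕ) :
    posCount X n + negCount X n = n := by
  classical
  unfold posCount negCount
  have hfe : (Finset.Icc 1 n).filter (fun j => X j = -1)
      = (Finset.Icc 1 n).filter (fun j => ¬ X j = 1) := by
    apply Finset.filter_congr
    intro j _
    rcases hX j with h | h <;> simp [h]
  rw [hfe, Finset.card_filter_add_card_filter_not, Nat.card_Icc]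
  omega

private lemma neg_ivt (X : ℕ → ℤ) {v n : ℕ} (hv : 0 < v) (h : v ≤ negCount X n) :
    ∃ i, 1 ≤ i ∧ i ≤ n ∧ negCount X i = v := by
  induction n with
  | zero => simp [negCount] at h; omega
  | succ n ih =>
    by_cases h' : v ≤ negCount X n
    · obtain ⟨i, h1, h2, h3⟩ := ih h'
      exact ⟨i, h1, by omega, h3⟩
    · have step : negCount X (n+1) ≤ negCount X n + 1 := by
        have := card_filter_le_add (fun j => X j = -1) (Nat.le_succ n)
        simpa [negCount] using this
      exact ⟨n+1, by omega, le_refl _, by omega⟩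

/-- The early-stopped negative binomial count is at most `k - 1` iff the truncated
binomial count (up to position `min p (k+v-1)`) is at most `k - 1`. -/
theorem stmt_3 (X : ℕ → ℤ) (hX : ∀ i, X i = 1 ∨ X i = -1)
    (p v k : ℕ) (hp : 0 < p) (hv : 0 < v) (hk : 0 < k) :
    posCount X (stopTime X p v) ≤ k - 1 ↔ posCount X (min p (k + v - 1)) ≤ k - 1 := by
  classical
  set m := min p (k + v - 1) with hm
  have hmp : m ≤ p := min_le_left _ _
  have hmk : m ≤ k + v - 1 := min_le_right _ _
  have keym := pos_add_neg X hX m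
  by_cases hex : ∃ i ∈ Finset.Icc 1 p, negCount X i = v
  · rw [stopTime, if_pos hex]
    set T := sInf {i | i ∈ Finset.Icc 1 p ∧ negCount X i = v} with hT
    have hTmem : T ∈ {i | i ∈ Finset.Icc 1 p ∧ negCount X i = v} := by
      apply Nat.sInf_mem
      obtain ⟨i, hi, h⟩ := hex
      exact ⟨i, hi, h⟩
    obtain ⟨hT1, hT2⟩ := hTmem
    rw [Finset.mem_Icc] at hT1
    have keyT := pos_add_neg X hX T
    constructor
    · intro h
      have hTm : T ≤ m := le_min hT1.2 (by omega)
      have hle : posCount X m ≤ posCount X T + (m - T) :=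
        card_filter_le_add (fun i => X i = 1) hTm
      omega
    · intro h
      by_contra hc
      have hTgt : k + v - 1 < T := by omega
      have hmeq : m = k + v - 1 := min_eq_right (by omega)
      have hneg : negCount X m < v := by
        by_contra hng
        push_neg at hng
        obtain ⟨i, hi1, hi2, hi3⟩ := neg_ivt X hv hng
        have hTi : T ≤ i := Nat.sInf_le ⟨Finset.mem_Icc.mpr ⟨hi1, le_trans hi2 hmp⟩, hi3⟩
        omega
      omega
  · rw [stopTime, if_neg hex]
    push_neg at hex
    have hneg : negCount X p < v := by
      by_contra hng
      push_neg at hng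
      obtain ⟨i, h1, h2, h3⟩ := neg_ivt X hv hng
      exact hex i (Finset.mem_Icc.mpr ⟨h1, h2⟩) h3
    rcases le_or_gt p (k + v - 1) with hc | hc
    · rw [hm, min_eq_left hc]
    · have hmeq : m = k + v - 1 := min_eq_right (le_of_lt hc)
      have hmon : negCount X m ≤ negCount X p := card_filter_mono (fun j => X j = -1) hmp
      have hpk : posCount X m ≤ posCount X p := card_filter_mono (fun i => X i = 1) hmp
      omega
end

section
/- Let c > 0 be a real number and i a positive integer. Then ⌊ (c/(1+c)) · ⌈(1+c) i⌉ ⌋ = ⌊ c i ⌋. -/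
/-- Floor–ceiling identity: for real `c > 0` and a positive integer `i`,
`⌊(c/(1+c)) ⌈(1+c) i⌉⌋ = ⌊c i⌋`. -/
theorem stmt_6 (c : ℝ) (hc : 0 < c) (i : ℕ) (hi : 1 ≤ i) :
    ⌊(c / (1 + c)) * ((⌈(1 + c) * (i : ℝ)⌉ : ℤ) : ℝ)⌋ = ⌊c * (i : ℝ)⌋ := by
  have h1c : (0:ℝ) < 1 + c := by linarith
  set k := ⌊c * (i:ℝ)⌋ with hk
  have hm : (⌈(1 + c) * (i : ℝ)⌉ : ℤ) = ⌈c * (i:ℝ)⌉ + i := by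
    rw [add_mul, one_mul, add_comm]
    exact_mod_cast Int.ceil_add_intCast (c * (i:ℝ)) (i : ℤ)
  rw [hm]
  have hceil_le : (⌈c * (i:ℝ)⌉ : ℝ) ≤ (k:ℝ) + 1 := by
    exact_mod_cast Int.ceil_le_floor_add_one (c * (i:ℝ))
  have hle_ceil : c * i ≤ (⌈c * (i:ℝ)⌉ : ℝ) := Int.le_ceil _
  have hkle : (k:ℝ) ≤ c * i := Int.floor_le _
  have hlt : c * i < (k:ℝ) + 1 := Int.lt_floor_add_one _
  rw [Int.floor_eq_iff]
  push_cast
  constructor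
  · rw [div_mul_eq_mul_div, le_div_iff₀ h1c]
    nlinarith
  · rw [div_mul_eq_mul_div, div_lt_iff₀ h1c]
    nlinarith
end

section
/- Let I be a finite set, m ≥ 1, K_1 ⊆ … ⊆ K_m ⊆ I nested subsets, and k_1,…,k_m positive integers. Define d̄(R) = max( max_{1 ≤ i ≤ m}( |R ∩ K_i| − k_i ), 0 ) for R ⊆ I. Then for all disjoint U, V ⊆ I: d̄(U) + d̄(V) ≤ d̄(U ∪ V) ≤ d̄(U) + |V|. -/
/-- Coherence of the interpolated true-discovery bound
`d̄(R) = max(max_i(|R ∩ K_i| - k_i), 0)` built from nested reference sets: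
for disjoint `U, V ⊆ I`, `d̄(U) + d̄(V) ≤ d̄(U ∪ V) ≤ d̄(U) + |V|`. -/
theorem stmt_9 {α : Type*} [DecidableEq α] (I : Finset α) (m : ℕ) (hm : 0 < m)
    (K : Fin m → Finset α) (hKnest : ∀ i j : Fin m, i ≤ j → K i ⊆ K j)
    (hKI : ∀ i, K i ⊆ I)
    (k : Fin m → ℕ) (hk : ∀ i, 1 ≤ k i)
    (dbar : Finset α → ℤ)
    (hdbar : ∀ R : Finset α, dbar R =
      max (Finset.univ.sup' ⟨⟨0, hm⟩, Finset.mem_univ _⟩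
        (fun i => ((R ∩ K i).card : ℤ) - (k i : ℤ))) 0)
    (U V : Finset α) (hU : U ⊆ I) (hV : V ⊆ I) (hdisj : Disjoint U V) :
    dbar U + dbar V ≤ dbar (U ∪ V) ∧ dbar (U ∪ V) ≤ dbar U + (V.card : ℤ) := by
  classical
  have hne : (Finset.univ : Finset (Fin m)).Nonempty := ⟨⟨0, hm⟩, Finset.mem_univ _⟩
  set f : Finset α → Fin m → ℤ := fun R i => ((R ∩ K i).card : ℤ) - (k i : ℤ) with hf
  have hge0 : ∀ R, 0 ≤ dbar R := by
    intro R; rw [hdbar]; exact le_max_right _ _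
  have hgef : ∀ R i, f R i ≤ dbar R := by
    intro R i; rw [hdbar]
    exact le_trans (Finset.le_sup' _ (Finset.mem_univ i)) (le_max_left _ _)
  have hmono : ∀ R S : Finset α, R ⊆ S → dbar R ≤ dbar S := by
    intro R S hRS
    rw [hdbar S]
    rw [hdbar R]
    refine max_le ?_ (le_max_right _ _)
    refine le_trans ?_ (le_max_left _ _)
    refine Finset.sup'_le _ _ (fun i _ => ?_)
    refine le_trans ?_ (Finset.le_sup' _ (Finset.mem_univ i))
    have : (R ∩ K i).card ≤ (S ∩ K i).card :=
      Finset.card_le_card (Finset.inter_subset_inter hRS le_rfl)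
    omega
  have hcard : ∀ i, (((U ∪ V) ∩ K i).card : ℤ) = ((U ∩ K i).card : ℤ) + ((V ∩ K i).card : ℤ) := by
    intro i
    rw [Finset.union_inter_distrib_right, Finset.card_union_of_disjoint]
    · push_cast; ring
    · exact Finset.disjoint_of_subset_left (Finset.inter_subset_left)
        (Finset.disjoint_of_subset_right (Finset.inter_subset_left) hdisj)
  constructor
  · -- superadditivity
    rcases le_or_gt (Finset.univ.sup' hne (f U)) 0 with hU0 | hUpos
    · have : dbar U = 0 := by rw [hdbar]; exact max_eq_right hU0
      rw [this, zero_add]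
      exact hmono _ _ Finset.subset_union_right
    rcases le_or_gt (Finset.univ.sup' hne (f V)) 0 with hV0 | hVpos
    · have : dbar V = 0 := by rw [hdbar]; exact max_eq_right hV0
      rw [this, add_zero]
      exact hmono _ _ Finset.subset_union_left
    have hUeq : dbar U = Finset.univ.sup' hne (f U) := by
      rw [hdbar]; exact max_eq_left hUpos.le
    have hVeq : dbar V = Finset.univ.sup' hne (f V) := by
      rw [hdbar]; exact max_eq_left hVpos.le
    obtain ⟨i, -, hi⟩ := Finset.exists_mem_eq_sup' hne (f U)
    obtain ⟨j, -, hj⟩ := Finset.exists_mem_eq_sup' hne (f V)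
    rw [hUeq, hi, hVeq, hj]
    rcases le_total i j with hij | hij
    · have h1 : ((U ∩ K i).card : ℤ) ≤ ((U ∩ K j).card : ℤ) := by
        exact_mod_cast Finset.card_le_card (Finset.inter_subset_inter le_rfl (hKnest i j hij))
      have h2 := hgef (U ∪ V) j
      have h3 := hcard j
      simp only [f] at h2 ⊢
      have hki : (0 : ℤ) ≤ (k i : ℤ) := Int.ofNat_nonneg _
      omega
    · have h1 : ((V ∩ K j).card : ℤ) ≤ ((V ∩ K i).card : ℤ) := by
        exact_mod_cast Finset.card_le_card (Finset.inter_subset_inter le_rfl (hKnest j i hij))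
      have h2 := hgef (U ∪ V) i
      have h3 := hcard i
      simp only [f] at h2 ⊢
      have hkj : (0 : ℤ) ≤ (k j : ℤ) := Int.ofNat_nonneg _
      omega
  · -- Lipschitz upper bound
    rw [hdbar (U ∪ V)]
    refine max_le ?_ (by have := hge0 U; positivity)
    refine Finset.sup'_le _ _ (fun i _ => ?_)
    have h1 := hgef U i
    have h2 := hcard i
    have h3 : ((V ∩ K i).card : ℤ) ≤ (V.card : ℤ) := by
      exact_mod_cast Finset.card_le_card (Finset.inter_subset_left)
    simp only [f] at h1 ⊢
    omega
end

section
/- Let p ≥ 1, let W : {1,…,p} → ℝ with |W_1| > |W_2| > … > |W_p| > 0 and all W_i ≠ 0. For a positive integer v define the threshold T(v) = max{ |W_i| : #{ j : |W_j| ≥ |W_i| and W_j < 0 } = v } if #{j : W_j < 0} ≥ v, and T(v) = min_i |W_i| otherwise; and define Ŝ(v) = { i : W_i ≥ T(v) }. Then for any null set N ⊆ {1,…,p} such that W_i > 0 for all i ∉ N, and any v, the set Ŝ(v) ∩ N equals the set of null indices i with W_i > 0 occurring (in the ordering by decreasing |W|) strictly before the v-th null index with negative W (or all positive null indices if fewer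 than v null indices are negative). -/
/-- Deterministic characterization of `Ŝ(v) ∩ N`: with statistics ordered by
strictly decreasing absolute value, all non-null statistics positive, threshold
`T` as in Janson–Su (the largest `|W i|` such that exactly `v` negative
statistics have absolute value at least `|W i|`, or the minimal `|W i|` if there
are fewer than `v` negatives) and `Ŝ(v) = {i : W i ≥ T}`:
if at least `v` null statistics are negative, `Ŝ(v) ∩ N` is the set of null
indices `i` with `W i > 0` occurring strictly before the `v`-th negative null
index `j⋆`; otherwise it is the set of all positive null indices. -/
theorem stmt_14 (p : ℕ) (hp : 0 < p) (W : Fin p → ℝ)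
    (hWne : ∀ i, W i ≠ 0)
    (hsort : ∀ i j : Fin p, i < j → |W j| < |W i|)
    (N : Finset (Fin p)) (hnonnull : ∀ i, i ∉ N → 0 < W i)
    (v : ℕ) (hv : 1 ≤ v)
    (T : ℝ)
    (hT1 : v ≤ (Finset.univ.filter (fun j => W j < 0)).card →
      IsGreatest {x : ℝ | ∃ i : Fin p,
        (Finset.univ.filter (fun j => |W i| ≤ |W j| ∧ W j < 0)).card = v ∧
        x = |W i|} T)
    (hT2 : (Finset.univ.filter (fun j => W j < 0)).card < v →
      IsLeast {x : ℝ | ∃ i : Fin p, x = |W i|} T)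
    (Shat : Finset (Fin p)) (hShat : Shat = Finset.univ.filter (fun i => T ≤ W i))
    (jstar : Fin p)
    (hjstar : v ≤ (N.filter (fun j => W j < 0)).card →
      jstar ∈ N ∧ W jstar < 0 ∧
        (N.filter (fun j => j ≤ jstar ∧ W j < 0)).card = v) :
    (v ≤ (N.filter (fun j => W j < 0)).card →
      Shat ∩ N = N.filter (fun i => 0 < W i ∧ i < jstar)) ∧
    ((N.filter (fun j => W j < 0)).card < v →
      Shat ∩ N = N.filter (fun i => 0 < W i)) := by
  have habs : ∀ i j : Fin p, |W i| ≤ |W j| ↔ j ≤ i := by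
    intro i j
    constructor
    · intro h
      by_contra hc
      push_neg at hc
      exact absurd h (not_le.2 (hsort i j hc))
    · intro h
      rcases eq_or_lt_of_le h with rfl | h
      · exact le_rfl
      · exact (hsort j i h).le
  have hneg_mem : ∀ j, W j < 0 → j ∈ N := by
    intro j h
    by_contra hn
    linarith [hnonnull j hn]
  have hnegset : Finset.univ.filter (fun j => W j < 0) = N.filter (fun j => W j < 0) := by
    ext j
    simp only [Finset.mem_filter, Finset.mem_univ, true_and]
    exact ⟨fun h => ⟨hneg_mem j h, h⟩, fun h => h.2⟩
  have hcount : ∀ i : Fin p,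
      Finset.univ.filter (fun j => |W i| ≤ |W j| ∧ W j < 0)
        = N.filter (fun j => j ≤ i ∧ W j < 0) := by
    intro i
    ext j
    simp only [Finset.mem_filter, Finset.mem_univ, true_and, habs i j]
    exact ⟨fun h => ⟨hneg_mem j h.2, h⟩, fun h => h.2⟩
  have habs_pos : ∀ i : Fin p, 0 < |W i| := fun i => abs_pos.2 (hWne i)
  constructor
  · intro hv1
    obtain ⟨hjN, hjneg, hjcard⟩ := hjstar hv1
    have hv1' : v ≤ (Finset.univ.filter (fun j => W j < 0)).card := by
      rw [hnegset]; exact hv1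
    obtain ⟨hTmem, hTub⟩ := hT1 hv1'
    have hjw : (Finset.univ.filter (fun j => |W jstar| ≤ |W j| ∧ W j < 0)).card = v := by
      rw [hcount jstar]; exact hjcard
    have hle1 : |W jstar| ≤ T := hTub ⟨jstar, hjw, rfl⟩
    obtain ⟨i0, hi0card, hi0T⟩ := hTmem
    have hji0 : jstar ≤ i0 := by
      by_contra hc
      push_neg at hc
      have hss : N.filter (fun j => j ≤ i0 ∧ W j < 0)
          ⊂ N.filter (fun j => j ≤ jstar ∧ W j < 0) := by
        constructor
        · intro j hj
          simp only [Finset.mem_filter] at hj ⊢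
          exact ⟨hj.1, le_trans hj.2.1 hc.le, hj.2.2⟩
        · intro hsub
          have := hsub (by simp [Finset.mem_filter, hjN, hjneg] :
            jstar ∈ N.filter (fun j => j ≤ jstar ∧ W j < 0))
          simp only [Finset.mem_filter] at this
          exact absurd this.2.1 (not_le.2 hc)
      have := Finset.card_lt_card hss
      rw [hjcard] at this
      rw [hcount i0] at hi0card
      omega
    have hle2 : T ≤ |W jstar| := by
      rw [hi0T]; exact (habs i0 jstar).2 hji0
    have hTeq : T = |W jstar| := le_antisymm hle2 hle1
    have hTpos : 0 < T := hTeq ▸ habs_pos jstar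
    rw [hShat]
    ext i
    simp only [Finset.mem_inter, Finset.mem_filter, Finset.mem_univ, true_and]
    constructor
    · rintro ⟨hTi, hiN⟩
      have hWpos : 0 < W i := lt_of_lt_of_le hTpos hTi
      have : |W jstar| ≤ |W i| := by
        rw [abs_of_pos hWpos]; rw [hTeq] at hTi; exact hTi
      have hij : i ≤ jstar := (habs jstar i).1 this
      have hne : i ≠ jstar := by
        rintro rfl; linarith
      exact ⟨hiN, hWpos, lt_of_le_of_ne hij hne⟩
    · rintro ⟨hiN, hWpos, hij⟩
      refine ⟨?_, hiN⟩
      have : |W jstar| < |W i| := hsort i jstar hij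
      rw [abs_of_pos hWpos] at this
      rw [hTeq]
      exact this.le
  · intro hv2
    have hv2' : (Finset.univ.filter (fun j => W j < 0)).card < v := by
      rw [hnegset]; exact hv2
    obtain ⟨hTmem, hTlb⟩ := hT2 hv2'
    obtain ⟨i1, hi1⟩ := hTmem
    have hTpos : 0 < T := hi1 ▸ habs_pos i1
    rw [hShat]
    ext i
    simp only [Finset.mem_inter, Finset.mem_filter, Finset.mem_univ, true_and]
    constructor
    · rintro ⟨hTi, hiN⟩
      exact ⟨hiN, lt_of_lt_of_le hTpos hTi⟩
    · rintro ⟨hiN, hWpos⟩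
      refine ⟨?_, hiN⟩
      have : T ≤ |W i| := hTlb ⟨i, rfl⟩
      rwa [abs_of_pos hWpos] at this
end

section
/- Let p, m ≥ 1, let π be a permutation of {1,…,p}, and for each I ⊆ {1,…,p} and i ∈ {1,…,m} let L_i : 𝒫({1,…,p}) → ℕ be set functions satisfying the monotonicity condition: for any two sets I_1 = {u_1,…,u_s} and I_2 = {w_1,…,w_s} of equal size s listed so that π(u_1) < … < π(u_s) and π(w_1) < … < π(w_s), if π(u_j) ≤ π(w_j) for all j then L_i(I_1) ≤ L_i(I_2) for all i. Suppose critical values z_i depend only on |I|, and say I is locally rejected iff L_i(I) ≥ z_i^{|I|} for some i. Fix I of size s and t ∈ {1,…,p−s}, and let U = I ∪ C_t where C_t consists of the t elements of the complement I^c with the smallest π-values. If U is locally rejected, then every superset of I of size s + t is locally rejected. -/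
lemma key_order {α : Type*} [LinearOrder α] (A B : Finset α) (n : ℕ)
    (hA : A.card = n) (hB : B.card = n)
    (hcount : ∀ x, (B.filter (· ≤ x)).card ≤ (A.filter (· ≤ x)).card)
    (j : Fin n) : A.orderEmbOfFin hA j ≤ B.orderEmbOfFin hB j := by
  by_contra hlt
  push_neg at hlt
  set b := B.orderEmbOfFin hB j with hb
  have h1 : j + 1 ≤ (B.filter (· ≤ b)).card := by
    have := Finset.card_le_card_of_injOn (f := fun k : Fin n => B.orderEmbOfFin hB k)
      (s := Finset.Iic j) (t := B.filter (· ≤ b))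
      (fun k hk => by
        simp only [Finset.mem_coe, Finset.mem_Iic] at hk
        simp only [Finset.mem_coe, Finset.mem_filter]
        exact ⟨B.orderEmbOfFin_mem hB k, (B.orderEmbOfFin hB).monotone hk⟩)
      (fun a _ c _ h => (B.orderEmbOfFin hB).injective h)
    simpa [Fin.card_Iic] using this
  have h2 : (A.filter (· ≤ b)).card ≤ j := by
    have hsub : A.filter (· ≤ b) ⊆ (Finset.Iio j).image (A.orderEmbOfFin hA) := by
      intro a ha
      simp only [Finset.mem_filter] at ha
      obtain ⟨k, hk⟩ : ∃ k, A.orderEmbOfFin hA k = a := by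
        have : a ∈ Set.range (A.orderEmbOfFin hA) := by
          rw [Finset.range_orderEmbOfFin]; exact ha.1
        exact this
      have hkj : k < j := by
        have : A.orderEmbOfFin hA k < A.orderEmbOfFin hA j := lt_of_le_of_lt (hk ▸ ha.2) hlt
        exact (A.orderEmbOfFin hA).lt_iff_lt.mp this
      exact Finset.mem_image.mpr ⟨k, Finset.mem_Iio.mpr hkj, hk⟩
    calc (A.filter (· ≤ b)).card ≤ ((Finset.Iio j).image (A.orderEmbOfFin hA)).card :=
          Finset.card_le_card hsub
      _ ≤ (Finset.Iio j).card := Finset.card_image_le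
      _ = j := Fin.card_Iio j
  have := le_trans h1 (le_trans (hcount b) h2)
  omega

/-- In the closed-testing shortcut, if the test statistics `L i` are monotone
with respect to the coordinatewise `π`-order on equal-size sets and the
critical values `z i` depend only on cardinality, then local rejection of
`U = I ∪ C_t` (with `C_t` the `t` elements of `Iᶜ` of smallest `π`-values)
implies local rejection of every superset of `I` of size `s + t`. -/
theorem stmt_16 (p m : ℕ) (hp : 0 < p) (hm : 0 < m)
    (π : Equiv.Perm (Fin p))
    (L : Fin m → Finset (Fin p) → ℕ)
    (z : Fin m → ℕ → ℕ)
    (hmono : ∀ (s : ℕ) (I1 I2 : Finset (Fin p))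
      (h1 : (I1.image fun u => π u).card = s)
      (h2 : (I2.image fun u => π u).card = s),
      (∀ j : Fin s, (I1.image fun u => π u).orderEmbOfFin h1 j ≤
        (I2.image fun u => π u).orderEmbOfFin h2 j) →
      ∀ i, L i I1 ≤ L i I2)
    (I : Finset (Fin p)) (s t : ℕ) (hs : I.card = s) (ht : 1 ≤ t)
    (C : Finset (Fin p)) (hC1 : C ⊆ Iᶜ) (hC2 : C.card = t)
    (hC3 : ∀ x ∈ C, ∀ y ∈ Iᶜ \ C, π x < π y)
    (hrej : ∃ i, z i (I ∪ C).card ≤ L i (I ∪ C)) :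
    ∀ J : Finset (Fin p), I ⊆ J → J.card = s + t →
      ∃ i, z i J.card ≤ L i J := by
  intro J hIJ hJcard
  have hπinj : Function.Injective (fun u : Fin p => π u) := π.injective
  have hdisjIC : Disjoint I C := by
    rw [Finset.disjoint_right]
    intro a haC haI
    exact (Finset.mem_compl.mp (hC1 haC)) haI
  have hUcard : (I ∪ C).card = s + t := by
    rw [Finset.card_union_of_disjoint hdisjIC, hs, hC2]
  set D := J \ I with hD
  have hJ : J = I ∪ D := by
    rw [hD, Finset.union_sdiff_of_subset hIJ]
  have hdisjID : Disjoint I D := Finset.disjoint_sdiff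
  have hDcard : D.card = t := by
    have := Finset.card_sdiff_of_subset hIJ
    rw [← hD] at this
    omega
  -- counting condition
  have hcount : ∀ x : Fin p,
      ((J.image fun u => π u).filter (· ≤ x)).card ≤
      (((I ∪ C).image fun u => π u).filter (· ≤ x)).card := by
    intro x
    rw [Finset.filter_image, Finset.filter_image,
      Finset.card_image_of_injective _ hπinj, Finset.card_image_of_injective _ hπinj]
    have hfil : ∀ S T : Finset (Fin p), Disjoint S T →
        ((S ∪ T).filter (fun u => π u ≤ x)).card =
        (S.filter (fun u => π u ≤ x)).card + (T.filter (fun u => π u ≤ x)).card := by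
      intro S T hST
      rw [Finset.filter_union, Finset.card_union_of_disjoint
        (Finset.disjoint_filter_filter hST)]
    rw [hJ, hfil I D hdisjID, hfil I C hdisjIC]
    have hkey : (D.filter (fun u => π u ≤ x)).card ≤ (C.filter (fun u => π u ≤ x)).card := by
      by_cases hx : ∃ y ∈ D, y ∉ C ∧ π y ≤ x
      · obtain ⟨y, hyD, hyC, hyx⟩ := hx
        have hyIc : y ∈ Iᶜ \ C := by
          simp only [Finset.mem_sdiff, Finset.mem_compl]
          exact ⟨fun h => (Finset.mem_sdiff.mp hyD).2 h, hyC⟩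
        have : C.filter (fun u => π u ≤ x) = C := by
          apply Finset.filter_true_of_mem
          intro c hc
          exact le_of_lt (lt_of_lt_of_le (hC3 c hc y hyIc) hyx)
        rw [this, hC2]
        calc (D.filter (fun u => π u ≤ x)).card ≤ D.card := Finset.card_filter_le _ _
          _ = t := hDcard
      · push_neg at hx
        apply Finset.card_le_card
        intro y hy
        simp only [Finset.mem_filter] at hy ⊢
        exact ⟨by_contra fun h => absurd hy.2 (by simpa using hx y hy.1 h), hy.2⟩
    omega
  have h1 : ((I ∪ C).image fun u => π u).card = s + t := by
    rw [Finset.card_image_of_injective _ hπinj, hUcard]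
  have h2 : (J.image fun u => π u).card = s + t := by
    rw [Finset.card_image_of_injective _ hπinj, hJcard]
  have hL : ∀ i, L i (I ∪ C) ≤ L i J :=
    hmono (s + t) (I ∪ C) J h1 h2
      (fun j => key_order _ _ (s + t) h1 h2 hcount j)
  obtain ⟨i, hi⟩ := hrej
  exact ⟨i, le_trans (by rw [hJcard, ← hUcard]; exact hi) (hL i)⟩
end

section
/- Let p ≥ 1 and let Ŝ_0 = ∅ and Ŝ_i, Ŝ_i^− ⊆ {1,…,p} for i = 1,…,p be defined from a sign vector s ∈ {+1,−1}^p by Ŝ_i = { j ≤ i : s_j = +1 } and Ŝ_i^− = { j ≤ i : s_j = −1 }. Let n^− = |Ŝ_p^−| and for l = 0,…,n^− let a_l = max{ j ≥ 0 : |Ŝ_j^−| = l }. Then for any function V : ℕ → ℕ and any R ⊆ {1,…,p}: min_{1 ≤ j ≤ p} min( V(|Ŝ_j^−|) + |R \ Ŝ_j|, |R| ) = min_{0 ≤ l ≤ n^−} min( V(l) + |R \ Ŝ_{a_l}|, |R| ). -/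
/-- Positions of `+1`'s among the first `i` coordinates. -/
def posSet (ε : ℕ → ℤ) (i : ℕ) : Finset ℕ :=
  (Finset.Icc 1 i).filter (fun j => ε j = 1)

/-- Number of `-1`'s among the first `i` coordinates. -/
def negcnt (ε : ℕ → ℤ) (i : ℕ) : ℕ :=
  ((Finset.Icc 1 i).filter (fun j => ε j = -1)).card

lemma negcnt_mono (ε : ℕ → ℤ) : Monotone (negcnt ε) := fun _ _ hij =>
  Finset.card_le_card (Finset.filter_subset_filter _ (Finset.Icc_subset_Icc_right hij))

lemma posSet_mono (ε : ℕ → ℤ) {i j : ℕ} (h : i ≤ j) : posSet ε i ⊆ posSet ε j :=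
  Finset.filter_subset_filter _ (Finset.Icc_subset_Icc_right h)

/-- Reindexing identity: the minimum over all prefixes `j ∈ {1,…,p}` of
`min(V(|Ŝ_j⁻|) + |R \ Ŝ_j|, |R|)` equals the minimum over the change points
`a_l` (the last index at which exactly `l` minus-signs have appeared),
`l = 0,…,n⁻`, of `min(V(l) + |R \ Ŝ_{a_l}|, |R|)`. -/
theorem stmt_17 (p : ℕ) (hp : 1 ≤ p) (ε : ℕ → ℤ)
    (hε : ∀ j, ε j = 1 ∨ ε j = -1)
    (V : ℕ → ℕ) (R : Finset ℕ) (hR : R ⊆ Finset.Icc 1 p)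
    (a : ℕ → ℕ)
    (ha : ∀ l ≤ negcnt ε p, a l ≤ p ∧ negcnt ε (a l) = l ∧
      ∀ j ≤ p, negcnt ε j = l → j ≤ a l) :
    (Finset.Icc 1 p).inf' ⟨1, Finset.mem_Icc.mpr ⟨le_rfl, hp⟩⟩
        (fun j => min (V (negcnt ε j) + (R \ posSet ε j).card) R.card)
      = (Finset.range (negcnt ε p + 1)).inf'
          ⟨0, Finset.mem_range.mpr (Nat.succ_pos _)⟩
          (fun l => min (V l + (R \ posSet ε (a l)).card) R.card) := by
  apply le_antisymm
  · apply Finset.le_inf'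
    intro l hl
    rw [Finset.mem_range, Nat.lt_succ_iff] at hl
    obtain ⟨hap, hac, hmax⟩ := ha l hl
    rcases Nat.eq_zero_or_pos (a l) with h0 | h1
    · have hempty : posSet ε (a l) = ∅ := by
        rw [h0]; simp [posSet]
      rw [hempty, Finset.sdiff_empty]
      have hmem : 1 ∈ Finset.Icc 1 p := Finset.mem_Icc.mpr ⟨le_rfl, hp⟩
      refine le_trans (Finset.inf'_le _ hmem) ?_
      rw [min_eq_right (Nat.le_add_left _ _)]
      exact min_le_right _ _
    · have hmem : a l ∈ Finset.Icc 1 p := Finset.mem_Icc.mpr ⟨h1, hap⟩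
      refine le_trans (Finset.inf'_le _ hmem) ?_
      rw [hac]
  · apply Finset.le_inf'
    intro j hj
    rw [Finset.mem_Icc] at hj
    have hl : negcnt ε j ≤ negcnt ε p := negcnt_mono ε hj.2
    obtain ⟨hap, hac, hmax⟩ := ha (negcnt ε j) hl
    have hja : j ≤ a (negcnt ε j) := hmax j hj.2 rfl
    have hcard : (R \ posSet ε (a (negcnt ε j))).card ≤ (R \ posSet ε j).card :=
      Finset.card_le_card (Finset.sdiff_subset_sdiff le_rfl (posSet_mono ε hja))
    refine le_trans (Finset.inf'_le _ (Finset.mem_range.mpr (Nat.lt_succ_of_le hl))) ?_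
    exact min_le_min (Nat.add_le_add_left hcard _) le_rfl
end
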